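/- Let G be a connected finite simple graph on n ≥ 3 vertices and let k ≥ 1. Then G has a connected dominating set of size at most k if and only if G has a spanning tree with at least n − k leaves. -/

import Mathlib

open SimpleGraph

variable {V : Type} [Fintype V]

lemma conn_sdiff {H : SimpleGraph V} {v w : V}
    (hr : (H \ SimpleGraph.fromEdgeSet {s(v, w)}).Reachable v w) (hH : H.Connected) :
    (H \ SimpleGraph.fromEdgeSet {s(v, w)}).Connected := by
  rw [SimpleGraph.connected_iff] at hH ⊢
  refine ⟨fun x y => ?_, hH.2⟩
  obtain ⟨p⟩ := hH.1 x y
  induction p with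
  | nil => exact Reachable.refl _
  | @cons a c b hadj q ih =>
    refine Reachable.trans ?_ ih
    by_cases he : s(a, c) = s(v, w)
    · rw [Sym2.eq_iff] at he
      rcases he with ⟨rfl, rfl⟩ | ⟨rfl, rfl⟩
      · exact hr
      · exact hr.symm
    · exact SimpleGraph.Adj.reachable ⟨hadj, by simp [SimpleGraph.fromEdgeSet_adj, he]⟩

lemma exists_spanning_tree_aux (G : SimpleGraph V) :
    ∀ n (H : SimpleGraph V), H ≤ G → H.Connected → H.edgeSet.ncard ≤ n →
      ∃ T : SimpleGraph V, T ≤ G ∧ T.IsTree ∧ T ≤ H := by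
  intro n
  induction n with
  | zero =>
    intro H hle hconn hcard
    by_cases hac : H.IsAcyclic
    · exact ⟨H, hle, ⟨hconn, hac⟩, le_refl _⟩
    · exfalso
      simp only [IsAcyclic, not_forall, not_not] at hac
      obtain ⟨u, c, hc⟩ := hac
      obtain ⟨e, he⟩ : ∃ e, e ∈ c.edges := by
        cases c with
        | nil => exact absurd rfl hc.ne_nil
        | cons h q => exact ⟨_, List.mem_cons_self⟩
      have heH : e ∈ H.edgeSet := c.edges_subset_edgeSet he
      have : H.edgeSet.Nonempty := ⟨e, heH⟩
      have := this.ncard_pos (Set.toFinite _)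
      omega
  | succ m ih =>
    intro H hle hconn hcard
    by_cases hac : H.IsAcyclic
    · exact ⟨H, hle, ⟨hconn, hac⟩, le_refl _⟩
    · simp only [IsAcyclic, not_forall, not_not] at hac
      obtain ⟨u, c, hc⟩ := hac
      obtain ⟨e, he⟩ : ∃ e, e ∈ c.edges := by
        cases c with
        | nil => exact absurd rfl hc.ne_nil
        | cons h q => exact ⟨_, List.mem_cons_self⟩
      induction e with
      | h v w =>
      have hadj : H.Adj v w := c.adj_of_mem_edges he
      have hreach : (H \ SimpleGraph.fromEdgeSet {s(v, w)}).Reachable v w :=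
        (SimpleGraph.adj_and_reachable_delete_edges_iff_exists_cycle.mpr ⟨u, c, hc, he⟩).2
      set H' := H \ SimpleGraph.fromEdgeSet {s(v, w)} with hH'
      have hconn' : H'.Connected := conn_sdiff hreach hconn
      have hsub : H'.edgeSet ⊆ H.edgeSet \ {s(v, w)} := by
        rw [SimpleGraph.edgeSet_sdiff]
        intro x hx
        rcases hx with ⟨h1, h2⟩
        refine ⟨h1, ?_⟩
        simp only [SimpleGraph.edgeSet_fromEdgeSet, Set.mem_diff, Set.mem_singleton_iff] at h2 ⊢
        intro hxe
        exact h2 ⟨hxe, by subst hxe; simpa using hadj.ne⟩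
      have hlt : H'.edgeSet.ncard < H.edgeSet.ncard := by
        calc H'.edgeSet.ncard ≤ (H.edgeSet \ {s(v, w)}).ncard :=
              Set.ncard_le_ncard hsub (Set.toFinite _)
          _ < H.edgeSet.ncard := by
              apply Set.ncard_diff_singleton_lt_of_mem ((H.mem_edgeSet.mpr hadj)) (Set.toFinite _)
      obtain ⟨T, h1, h2, h3⟩ := ih H' (le_trans (by rw [hH']; exact sdiff_le) hle) hconn' (by omega)
      exact ⟨T, h1, h2, le_trans h3 (by rw [hH']; exact sdiff_le)⟩

lemma exists_spanning_tree (G : SimpleGraph V) (hG : G.Connected) :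
    ∃ T : SimpleGraph V, T ≤ G ∧ T.IsTree := by
  obtain ⟨T, h1, h2, _⟩ := exists_spanning_tree_aux G G.edgeSet.ncard G le_rfl hG le_rfl
  exact ⟨T, h1, h2⟩

lemma neighbor_nonempty {H : SimpleGraph V} (hH : H.Connected)
    (h2 : 2 ≤ Fintype.card V) (x : V) : (H.neighborSet x).Nonempty := by
  obtain ⟨y, hy⟩ := Fintype.exists_ne_of_one_lt_card (by omega) x
  obtain ⟨p⟩ := hH x y
  cases p with
  | nil => exact absurd rfl hy
  | cons h q => exact ⟨_, h⟩

lemma adj_leaves_false {H : SimpleGraph V} (hH : H.Connected)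
    (h3 : 3 ≤ Fintype.card V) {u v : V} (huv : H.Adj u v)
    (hu : (H.neighborSet u).ncard = 1) (hv : (H.neighborSet v).ncard = 1) : False := by
  have hNu : H.neighborSet u = {v} := by
    obtain ⟨a, ha⟩ := Set.ncard_eq_one.mp hu
    have : v ∈ H.neighborSet u := huv
    rw [ha] at this ⊢; rw [Set.mem_singleton_iff] at this; rw [this]
  have hNv : H.neighborSet v = {u} := by
    obtain ⟨a, ha⟩ := Set.ncard_eq_one.mp hv
    have : u ∈ H.neighborSet v := huv.symm
    rw [ha] at this ⊢; rw [Set.mem_singleton_iff] at this; rw [this]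
  have key : ∀ {x y : V} (_ : H.Walk x y), x ∈ ({u, v} : Set V) → y ∈ ({u, v} : Set V) := by
    intro x y p
    induction p with
    | nil => exact id
    | @cons a c b h q ih =>
      intro ha
      apply ih
      rcases ha with rfl | ha
      · have : c ∈ H.neighborSet a := h
        rw [hNu] at this
        exact Or.inr this
      · rw [Set.mem_singleton_iff] at ha; subst ha
        have : c ∈ H.neighborSet a := h
        rw [hNv] at this
        exact Or.inl this
  have hex : ∃ w : V, w ≠ u ∧ w ≠ v := by
    by_contra hcon
    push_neg at hcon
    have hsub : (Set.univ : Set V) ⊆ {u, v} := by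
      intro w _
      rcases eq_or_ne w u with rfl | hw
      · exact Or.inl rfl
      · exact Or.inr (hcon w hw)
    have hc1 := Set.ncard_le_ncard hsub (Set.toFinite _)
    rw [Set.ncard_univ, Nat.card_eq_fintype_card] at hc1
    have hc2 : ({u, v} : Set V).ncard ≤ 2 :=
      le_trans (Set.ncard_insert_le _ _) (by rw [Set.ncard_singleton])
    omega
  obtain ⟨w, hw1, hw2⟩ := hex
  obtain ⟨p⟩ := hH u w
  have := key p (Or.inl rfl)
  rcases this with h | h
  · exact hw1 h
  · exact hw2 h

lemma support_deg {T : SimpleGraph V} {a b : V} (p : T.Walk a b) (hp : p.IsPath)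
    (hb : (T.neighborSet b).ncard ≠ 1) :
    ∀ x ∈ p.support, x = a ∨ (T.neighborSet x).ncard ≠ 1 := by
  induction p with
  | nil => intro x hx; rw [SimpleGraph.Walk.support_nil, List.mem_singleton] at hx; exact Or.inl hx
  | @cons a c b h q ih =>
    rw [SimpleGraph.Walk.cons_isPath_iff] at hp
    intro x hx
    rw [SimpleGraph.Walk.support_cons, List.mem_cons] at hx
    rcases hx with rfl | hx
    · exact Or.inl rfl
    · rcases ih hp.1 hb x hx with rfl | hd
      · right
        cases q with
        | nil => exact hb
        | @cons _ d _ h' q' =>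
          intro h1
          have hd2 : 1 < (T.neighborSet x).ncard := by
            rw [Set.one_lt_ncard_iff (Set.toFinite _)]
            refine ⟨a, d, h.symm, h', ?_⟩
            intro hcon
            subst hcon
            exact hp.2 (by rw [SimpleGraph.Walk.support_cons]; exact List.mem_cons_of_mem _ q'.start_mem_support)
          omega
      · exact Or.inr hd

lemma walk_induce {G T : SimpleGraph V} (hTG : T ≤ G) (D : Set V) :
    ∀ {a b : V} (p : T.Walk a b), (∀ x ∈ p.support, x ∈ D) →
      ∀ (ha : a ∈ D) (hb : b ∈ D), (G.induce D).Reachable ⟨a, ha⟩ ⟨b, hb⟩ := by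
  intro a b p
  induction p with
  | nil => intro _ ha hb; rfl
  | @cons a c b h q ih =>
    intro hs ha hb
    have hc : c ∈ D := hs c (by rw [SimpleGraph.Walk.support_cons]; exact List.mem_cons_of_mem _ q.start_mem_support)
    have hadj : (G.induce D).Adj ⟨a, ha⟩ ⟨c, hc⟩ := hTG h
    exact hadj.reachable.trans (ih (fun x hx => hs x (by rw [SimpleGraph.Walk.support_cons]; exact List.mem_cons_of_mem _ hx)) hc hb)

theorem connectedDominatingSet_iff_spanningTree_leaves' {V : Type} [Fintype V]
    (G : SimpleGraph V) (hG : G.Connected) (n k : ℕ)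
    (hn : Fintype.card V = n) (hn3 : 3 ≤ n) (hk : 1 ≤ k) :
    (∃ D : Set V, D.Nonempty ∧ D.ncard ≤ k ∧ (G.induce D).Connected ∧
        ∀ v ∉ D, ∃ u ∈ D, G.Adj v u) ↔
    (∃ T : SimpleGraph V, T ≤ G ∧ T.IsTree ∧
        n - k ≤ {v : V | (T.neighborSet v).ncard = 1}.ncard) := by
  classical
  constructor
  · rintro ⟨D, hDne, hDk, hDconn, hdom⟩
    have hf : ∀ v, v ∉ D → ∃ u, u ∈ D ∧ G.Adj v u := by
      intro v hv
      obtain ⟨u, h1, h2⟩ := hdom v hv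
      exact ⟨u, h1, h2⟩
    let f : V → V := fun v => if h : v ∈ D then v else (hf v h).choose
    have hfD : ∀ v ∉ D, f v ∈ D ∧ G.Adj v (f v) := by
      intro v hv
      simp only [f, dif_neg hv]
      exact (hf v hv).choose_spec
    let G' : SimpleGraph V :=
      { Adj := fun x y => G.Adj x y ∧
          ((x ∈ D ∧ y ∈ D) ∨ (x ∉ D ∧ y = f x) ∨ (y ∉ D ∧ x = f y))
        symm := ⟨by rintro x y ⟨h1, h2⟩; exact ⟨h1.symm, by tauto⟩⟩
        loopless := ⟨fun x h => G.loopless.irrefl x h.1⟩ }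
    have hG'G : G' ≤ G := fun x y h => h.1
    have hVne : Nonempty V := Fintype.card_pos_iff.mp (by omega)
    have hDreach : ∀ a ∈ D, ∀ b ∈ D, G'.Reachable a b := by
      intro a ha b hb
      let φ : G.induce D →g G' := ⟨Subtype.val, by
        rintro ⟨x, hx⟩ ⟨y, hy⟩ hadj
        exact ⟨hadj, Or.inl ⟨hx, hy⟩⟩⟩
      exact (hDconn ⟨a, ha⟩ ⟨b, hb⟩).map φ
    have hstep : ∀ v : V, ∃ d ∈ D, G'.Reachable v d := by
      intro v
      by_cases hv : v ∈ D
      · exact ⟨v, hv, SimpleGraph.Reachable.refl _⟩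
      · exact ⟨f v, (hfD v hv).1,
          SimpleGraph.Adj.reachable ⟨(hfD v hv).2, Or.inr (Or.inl ⟨hv, rfl⟩)⟩⟩
    have hconn' : G'.Connected := by
      rw [SimpleGraph.connected_iff]
      refine ⟨fun x y => ?_, hVne⟩
      obtain ⟨dx, hdx, hx⟩ := hstep x
      obtain ⟨dy, hdy, hy⟩ := hstep y
      exact (hx.trans (hDreach dx hdx dy hdy)).trans hy.symm
    obtain ⟨T, hTG', hTree⟩ := exists_spanning_tree G' hconn'
    refine ⟨T, le_trans hTG' hG'G, hTree, ?_⟩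
    have hsub : Dᶜ ⊆ {v : V | (T.neighborSet v).ncard = 1} := by
      intro v hv
      have hv : v ∉ D := hv
      have hsub' : T.neighborSet v ⊆ {f v} := by
        intro y hy
        have hy' : G'.Adj v y := hTG' hy
        rcases hy'.2 with ⟨h1, _⟩ | ⟨_, h2⟩ | ⟨h1, h2⟩
        · exact absurd h1 hv
        · exact h2
        · exact absurd (h2 ▸ (hfD y h1).1) hv
      have hne : (T.neighborSet v).Nonempty :=
        neighbor_nonempty hTree.isConnected (by omega) v
      have h1 := Set.ncard_le_ncard hsub' (Set.toFinite _)
      rw [Set.ncard_singleton] at h1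
      have h2 := hne.ncard_pos (Set.toFinite _)
      show (T.neighborSet v).ncard = 1
      omega
    have h3 := Set.ncard_le_ncard hsub (Set.toFinite _)
    have h4 := Set.ncard_add_ncard_compl D (Set.toFinite _)
    rw [Nat.card_eq_fintype_card] at h4
    omega
  · rintro ⟨T, hTG, hTree, hL⟩
    have hDne : {v : V | (T.neighborSet v).ncard ≠ 1}.Nonempty := by
      by_contra hcon
      rw [Set.not_nonempty_iff_eq_empty] at hcon
      have hall : ∀ v : V, (T.neighborSet v).ncard = 1 := by
        intro v
        by_contra h
        have hmem : v ∈ {v : V | (T.neighborSet v).ncard ≠ 1} := h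
        rw [hcon] at hmem
        exact hmem
      have hVne : Nonempty V := Fintype.card_pos_iff.mp (by omega)
      obtain ⟨u, hu⟩ := neighbor_nonempty hTree.isConnected (by omega) (Classical.arbitrary V)
      exact adj_leaves_false hTree.isConnected (by omega) hu (hall _) (hall _)
    refine ⟨{v : V | (T.neighborSet v).ncard ≠ 1}, hDne, ?_, ?_, ?_⟩
    · have h4 := Set.ncard_add_ncard_compl
        {v : V | (T.neighborSet v).ncard = 1} (Set.toFinite _)
      rw [Nat.card_eq_fintype_card] at h4
      have hcompl : {v : V | (T.neighborSet v).ncard = 1}ᶜ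
          = {v : V | (T.neighborSet v).ncard ≠ 1} := rfl
      rw [hcompl] at h4
      omega
    · rw [SimpleGraph.connected_iff]
      refine ⟨?_, ?_⟩
      · rintro ⟨a, ha⟩ ⟨b, hb⟩
        obtain ⟨p⟩ := hTree.isConnected a b
        have hp : (p.toPath : T.Walk a b).IsPath := p.toPath.2
        have hs := support_deg (p.toPath : T.Walk a b) hp hb
        refine walk_induce hTG _ (p.toPath : T.Walk a b) ?_ ha hb
        intro x hx
        rcases hs x hx with rfl | h
        · exact ha
        · exact h
      · exact ⟨⟨hDne.choose, hDne.choose_spec⟩⟩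
    · intro v hv
      rw [Set.mem_setOf, not_not] at hv
      obtain ⟨u, husing⟩ := Set.ncard_eq_one.mp hv
      have huv : T.Adj v u := by rw [← SimpleGraph.mem_neighborSet, husing]; rfl
      refine ⟨u, ?_, hTG huv⟩
      intro hcon
      exact adj_leaves_false hTree.isConnected (by omega) huv hv hcon


theorem connectedDominatingSet_iff_spanningTree_leaves {V : Type} [Fintype V]
    (G : SimpleGraph V) (hG : G.Connected) (n k : ℕ)
    (hn : Fintype.card V = n) (hn3 : 3 ≤ n) (hk : 1 ≤ k) :
    (∃ D : Set V, D.Nonempty ∧ D.ncard ≤ k ∧ (G.induce D).Connected ∧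
        ∀ v ∉ D, ∃ u ∈ D, G.Adj v u) ↔
    (∃ T : SimpleGraph V, T ≤ G ∧ T.IsTree ∧
        n - k ≤ {v : V | (T.neighborSet v).ncard = 1}.ncard) := by
  exact connectedDominatingSet_iff_spanningTree_leaves' G hG n k hn hn3 hk
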